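/- Define a sequence of differential operators by L_0 = multiplication by (1−z), L_1 = (1−2z)D − 1, and L_k = L_{k−1}·D − L_{k−2}·D²·z for k ≥ 2, where D = d/dz. Write L_k = Σ_{i=0}^{k} ℓ_{k,i}(z) D^i with polynomials ℓ_{k,i}. Then for all k ≥ 2, ℓ_{k,0}(z) = 0. -/

import Mathlib

open Polynomial

/-- The differential operator family `L₀ = (1-z)·1`, `L₁ = (1-2z)D - 1`,
`L_k = L_{k-1}·D - L_{k-2}·D²·z`, acting on polynomials. -/
noncomputable def Lop : ℕ → Polynomial ℝ → Polynomial ℝ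
  | 0 => fun f => (1 - X) * f
  | 1 => fun f => (1 - 2 * X) * derivative f - f
  | (k + 2) => fun f =>
      Lop (k + 1) (derivative f) - Lop k (derivative (derivative (X * f)))

lemma Lop_zero : ∀ k, Lop k (0 : Polynomial ℝ) = 0 := by
  intro k
  induction k using Nat.strong_induction_on with
  | _ k ih =>
    match k with
    | 0 => simp [Lop]
    | 1 => simp [Lop]
    | (k + 2) =>
      simp [Lop, ih k (by omega), ih (k + 1) (by omega)]

lemma Lop_one (k : ℕ) : Lop (k + 2) (1 : Polynomial ℝ) = 0 := by
  simp [Lop, Lop_zero]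

/-- If `L_k = ∑_{i=0}^{k} ℓ_{k,i}(z) D^i`, then `ℓ_{k,0} = 0` for all `k ≥ 2`. -/
theorem stmt_6 (ℓ : ℕ → ℕ → Polynomial ℝ)
    (hdec : ∀ (k : ℕ) (f : Polynomial ℝ),
      Lop k f = ∑ i ∈ Finset.range (k + 1), ℓ k i * (derivative^[i] f)) :
    ∀ k : ℕ, 2 ≤ k → ℓ k 0 = 0 := by
  intro k hk
  obtain ⟨m, rfl⟩ : ∃ m, k = m + 2 := ⟨k - 2, by omega⟩
  have h := hdec (m + 2) 1
  rw [Lop_one] at h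
  have hsum : ∑ i ∈ Finset.range (m + 3), ℓ (m + 2) i * (derivative^[i] (1 : Polynomial ℝ))
      = ℓ (m + 2) 0 := by
    rw [Finset.sum_eq_single 0]
    · simp
    · intro i _ hi
      obtain ⟨j, rfl⟩ : ∃ j, i = j + 1 := ⟨i - 1, by omega⟩
      rw [Function.iterate_succ_apply]
      simp
    · simp
  rw [hsum] at h
  exact h.symm
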